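/- Let λ_1,…,λ_n be arbitrary real numbers, let c_1,…,c_n be complex numbers, and let f(x)=∑_{k=1}^n c_k e^{iλ_k x}. Then sup_{x∈ℝ} |f(x)| ≤ ∑_{k=1}^n |c_k|, with equality sup_{x∈ℝ} |f(x)| = ∑_{k=1}^n |c_k| whenever λ_1,…,λ_n are linearly independent over the field of rational numbers. -/

import Mathlib

set_option maxHeartbeats 1000000

open Complex Filter MeasureTheory intervalIntegral Finset Topology

private lemma mean_exp (μ : ℝ) :
    Tendsto (fun T : ℝ => (∫ x in (-T)..T, Complex.exp (Complex.I * μ * x)) / (2 * T))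
      atTop (𝓝 (if μ = 0 then 1 else 0)) := by
  rcases eq_or_ne μ 0 with h | h
  · rw [if_pos h]
    have hev : (fun T : ℝ => (∫ x in (-T)..T, Complex.exp (Complex.I * μ * x)) / (2 * T))
        =ᶠ[atTop] (fun _ => 1) := by
      filter_upwards [eventually_gt_atTop (0:ℝ)] with T hT
      simp only [h, Complex.ofReal_zero, mul_zero, zero_mul, Complex.exp_zero]
      rw [intervalIntegral.integral_const, Complex.real_smul, mul_one]
      have h2 : ((T - -T : ℝ) : ℂ) = 2 * T := by push_cast; ring
      rw [h2, div_self]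
      simp only [ne_eq, mul_eq_zero, OfNat.ofNat_ne_zero, false_or, Complex.ofReal_eq_zero]
      exact_mod_cast hT.ne'
    exact Tendsto.congr' hev.symm tendsto_const_nhds
  · simp only [if_neg h]
    have hb : ∀ᶠ T : ℝ in atTop,
        ‖(∫ x in (-T)..T, Complex.exp (Complex.I * μ * x)) / (2 * T)‖ ≤ (2 / |μ|) / (2 * T) := by
      filter_upwards [eventually_gt_atTop (0:ℝ)] with T hT
      have hc : (Complex.I * μ) ≠ 0 := by
        simp [Complex.ext_iff, h]
      rw [integral_exp_mul_complex hc]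
      rw [norm_div, norm_div]
      gcongr
      · calc ‖Complex.exp (Complex.I * μ * T) - Complex.exp (Complex.I * μ * (-T:ℝ))‖
            ≤ ‖Complex.exp (Complex.I * μ * T)‖ + ‖Complex.exp (Complex.I * μ * (-T:ℝ))‖ :=
              norm_sub_le _ _
          _ ≤ 2 := by
              rw [show Complex.I * μ * T = (μ * T : ℝ) * Complex.I by push_cast; ring,
                show Complex.I * μ * (-T:ℝ) = (μ * -T : ℝ) * Complex.I by push_cast; ring]
              rw [Complex.norm_exp_ofReal_mul_I,
                Complex.norm_exp_ofReal_mul_I]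
              norm_num
      · rw [show (Complex.I * μ) = (μ : ℝ) * Complex.I by ring]
        rw [norm_mul, Complex.norm_I, mul_one, Complex.norm_real, Real.norm_eq_abs]
      · rw [show ((2:ℂ) * T) = ((2 * T : ℝ) : ℂ) by push_cast; ring, Complex.norm_real,
          Real.norm_of_nonneg (by linarith)]
    have h0 : Tendsto (fun T : ℝ => (2 / |μ|) / (2 * T)) atTop (𝓝 0) := by
      apply Tendsto.div_atTop tendsto_const_nhds
      exact Tendsto.const_mul_atTop (by norm_num) tendsto_id
    exact tendsto_zero_iff_norm_tendsto_zero.mpr (squeeze_zero_norm' (hb.mono fun T hT => by rwa [norm_norm]) h0)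

private lemma mean_sum {ι : Type*} [Fintype ι] (d : ι → ℂ) (μ : ι → ℝ) :
    Tendsto (fun T : ℝ =>
        (∫ x in (-T)..T, ∑ i, d i * Complex.exp (Complex.I * μ i * x)) / (2 * T))
      atTop (𝓝 (∑ i, if μ i = 0 then d i else 0)) := by
  have hsplit : ∀ T : ℝ, (∫ x in (-T)..T, ∑ i, d i * Complex.exp (Complex.I * μ i * x))
      = ∑ i, d i * ∫ x in (-T)..T, Complex.exp (Complex.I * μ i * x) := by
    intro T
    rw [intervalIntegral.integral_finset_sum]
    · exact Finset.sum_congr rfl fun i _ => intervalIntegral.integral_const_mul _ _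
    · exact fun i _ => (Continuous.intervalIntegrable (by continuity) _ _)
  simp_rw [hsplit, Finset.sum_div, mul_div_assoc]
  apply tendsto_finset_sum
  intro i _
  have h2 : (if μ i = 0 then d i else 0) = d i * (if μ i = 0 then 1 else 0) := by
    split <;> simp
  rw [h2]
  exact (mean_exp (μ i)).const_mul (d i)

private lemma cntD (N : ℕ) :
    ∑ q : Fin (N+1) × Fin (N+1), (if q.1 = q.2 then (1:ℂ) else 0) = ((N+1 : ℕ) : ℂ) := by
  rw [Fintype.sum_prod_type]
  simp [Finset.sum_ite_eq]

private lemma cntN (N : ℕ) :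
    ∑ q : Fin (N+1) × Fin (N+1), (if (q.2 : ℕ) = (q.1 : ℕ) + 1 then (1:ℂ) else 0)
      = ((N : ℕ) : ℂ) := by
  rw [Fintype.sum_prod_type]
  have h1 : ∀ a : Fin (N+1), (∑ b : Fin (N+1), if (b : ℕ) = (a : ℕ) + 1 then (1:ℂ) else 0)
      = if (a : ℕ) < N then 1 else 0 := by
    intro a
    by_cases ha : (a : ℕ) < N
    · rw [if_pos ha]
      have : ∀ b : Fin (N+1), ((b : ℕ) = (a : ℕ) + 1) ↔ b = ⟨(a : ℕ) + 1, by omega⟩ := by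
        intro b; rw [Fin.ext_iff]
      simp_rw [this]
      simp
    · rw [if_neg ha]
      apply Finset.sum_eq_zero
      intro b _
      rw [if_neg]
      have := b.isLt
      omega
  simp_rw [h1]
  rw [Fin.sum_univ_eq_sum_range (fun i => if i < N then (1:ℂ) else 0)]
  rw [Finset.sum_range_succ, if_neg (lt_irrefl N), add_zero]
  rw [Finset.sum_congr rfl (fun i hi => if_pos (Finset.mem_range.mp hi))]
  simp

noncomputable def uu (c : ℂ) : ℂ := if c = 0 then 1 else c / (‖c‖ : ℂ)

private lemma uu_unit (c : ℂ) : uu c * (starRingEnd ℂ) (uu c) = 1 := by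
  rw [Complex.mul_conj]
  unfold uu
  by_cases h : c = 0
  · simp [h]
  · rw [if_neg h]
    have ha : ‖c‖ ≠ 0 := norm_ne_zero_iff.mpr h
    rw [Complex.normSq_div, Complex.normSq_ofReal, ← Complex.sq_norm]
    rw [sq, div_self (mul_ne_zero ha ha)]
    simp

private lemma mul_conj_uu (c : ℂ) : c * (starRingEnd ℂ) (uu c) = (‖c‖ : ℂ) := by
  unfold uu
  by_cases h : c = 0
  · simp [h]
  · rw [if_neg h]
    have ha : ‖c‖ ≠ 0 := norm_ne_zero_iff.mpr h
    rw [map_div₀, Complex.conj_ofReal, mul_div_assoc']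
    rw [Complex.mul_conj, ← Complex.sq_norm]
    rw [show ((‖c‖ ^ 2 : ℝ) : ℂ) = (‖c‖ : ℂ)^2 by push_cast; ring]
    rw [sq, mul_div_assoc, div_self (by exact_mod_cast ha), mul_one]

noncomputable def Wc {n : ℕ} (u : Fin n → ℂ) (N : ℕ) (p : Fin n → Fin (N+1) × Fin (N+1)) : ℂ :=
  ∏ j, (u j ^ ((p j).1 : ℕ) * (starRingEnd ℂ) (u j) ^ ((p j).2 : ℕ))

def Ee {n : ℕ} (lam : Fin n → ℝ) (N : ℕ) (p : Fin n → Fin (N+1) × Fin (N+1)) : ℝ :=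
  ∑ j, ((((p j).1 : ℕ) : ℝ) - (((p j).2 : ℕ) : ℝ)) * lam j

noncomputable def Qq {n : ℕ} (u : Fin n → ℂ) (lam : Fin n → ℝ) (N : ℕ) (k : Fin n) (x : ℝ) : ℂ :=
  ∑ j : Fin (N+1), u k ^ (j : ℕ) * Complex.exp (Complex.I * ((((j : ℕ) : ℝ) * lam k : ℝ) : ℂ) * (x : ℂ))

private lemma expand1 {n : ℕ} (u : Fin n → ℂ) (lam : Fin n → ℝ) (N : ℕ) (k : Fin n) (x : ℝ) :
    Qq u lam N k x * (starRingEnd ℂ) (Qq u lam N k x)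
      = ∑ q : Fin (N+1) × Fin (N+1),
          (u k ^ (q.1 : ℕ) * (starRingEnd ℂ) (u k) ^ (q.2 : ℕ)) *
            Complex.exp (Complex.I * ((((q.1 : ℕ) : ℝ) - ((q.2 : ℕ) : ℝ)) * lam k : ℝ) * x) := by
  unfold Qq
  rw [map_sum, Finset.sum_mul_sum, Fintype.sum_prod_type]
  refine Finset.sum_congr rfl fun a _ => Finset.sum_congr rfl fun b _ => ?_
  rw [map_mul, map_pow, ← Complex.exp_conj]
  have hconj : (starRingEnd ℂ) (Complex.I * ((((b : ℕ) : ℝ) * lam k : ℝ) : ℂ) * (x : ℂ))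
      = -(Complex.I * ((((b : ℕ) : ℝ) * lam k : ℝ) : ℂ) * (x : ℂ)) := by
    rw [map_mul, map_mul, Complex.conj_I, Complex.conj_ofReal, Complex.conj_ofReal]
    ring
  rw [hconj, mul_mul_mul_comm, ← Complex.exp_add]
  congr 2
  push_cast
  ring

private lemma expandP {n : ℕ} (u : Fin n → ℂ) (lam : Fin n → ℝ) (N : ℕ) (x : ℝ) :
    (∏ k, (Qq u lam N k x * (starRingEnd ℂ) (Qq u lam N k x)))
      = ∑ p : Fin n → Fin (N+1) × Fin (N+1),
          Wc u N p * Complex.exp (Complex.I * (Ee lam N p : ℝ) * x) := by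
  simp_rw [expand1]
  rw [Fintype.prod_sum]
  refine Finset.sum_congr rfl fun p _ => ?_
  rw [Finset.prod_mul_distrib]
  unfold Wc
  congr 1
  rw [← Complex.exp_sum]
  congr 1
  unfold Ee
  push_cast
  rw [Finset.mul_sum, Finset.sum_mul]

private lemma limP {n N : ℕ} (lam : Fin n → ℝ) (u : Fin n → ℂ)
    (hu1 : ∀ k, u k * (starRingEnd ℂ) (u k) = 1)
    (hind : ∀ r : Fin n → ℚ, (∑ k, (r k : ℝ) * lam k) = 0 → ∀ k, r k = 0) :
    (∑ p : Fin n → Fin (N+1) × Fin (N+1), if Ee lam N p = 0 then Wc u N p else 0)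
      = (((N+1)^n : ℕ) : ℂ) := by
  classical
  have hcond : ∀ p : Fin n → Fin (N+1) × Fin (N+1),
      Ee lam N p = 0 ↔ ∀ j, (p j).1 = (p j).2 := by
    intro p
    constructor
    · intro h0 j
      have hsum : (∑ j, (((((p j).1 : ℕ) : ℚ) - (((p j).2 : ℕ) : ℚ) : ℚ) : ℝ) * lam j)
          = Ee lam N p := by
        unfold Ee
        refine Finset.sum_congr rfl fun j _ => ?_
        push_cast
        ring
      have hr := hind (fun j => ((((p j).1 : ℕ) : ℚ) - (((p j).2 : ℕ) : ℚ)))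
        (by rw [hsum, h0]) j
      exact Fin.val_injective (by exact_mod_cast sub_eq_zero.mp hr)
    · intro h
      unfold Ee
      apply Finset.sum_eq_zero
      intro j _
      rw [h j]
      simp
  have hval : ∀ p : Fin n → Fin (N+1) × Fin (N+1), (if Ee lam N p = 0 then Wc u N p else 0)
      = ∏ j, (if (p j).1 = (p j).2 then (1:ℂ) else 0) := by
    intro p
    by_cases h : Ee lam N p = 0
    · rw [if_pos h]
      have hj := (hcond p).mp h
      unfold Wc
      refine Finset.prod_congr rfl fun j _ => ?_
      rw [if_pos (hj j), hj j, ← mul_pow, hu1 j, one_pow]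
    · rw [if_neg h]
      have hne : ¬ ∀ j, (p j).1 = (p j).2 := fun hc => h ((hcond p).mpr hc)
      push_neg at hne
      obtain ⟨j0, hj0⟩ := hne
      refine (Finset.prod_eq_zero (Finset.mem_univ j0) ?_).symm
      rw [if_neg hj0]
  simp_rw [hval]
  have key2 : (∑ p : Fin n → Fin (N+1) × Fin (N+1),
      ∏ j, (if (p j).1 = (p j).2 then (1:ℂ) else 0))
      = ∏ _j : Fin n, ∑ q : Fin (N+1) × Fin (N+1), (if q.1 = q.2 then (1:ℂ) else 0) :=
    (Fintype.prod_sum (fun (_j : Fin n) (q : Fin (N+1) × Fin (N+1)) =>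
      if q.1 = q.2 then (1:ℂ) else 0)).symm
  rw [key2]
  rw [Finset.prod_congr rfl fun j _ => cntD N]
  rw [Finset.prod_const, Finset.card_univ, Fintype.card_fin]
  push_cast
  ring

private lemma limFP {n N : ℕ} (lam : Fin n → ℝ) (c : Fin n → ℂ) (u : Fin n → ℂ)
    (hu1 : ∀ k, u k * (starRingEnd ℂ) (u k) = 1)
    (hu2 : ∀ k, c k * (starRingEnd ℂ) (u k) = (‖c k‖ : ℂ))
    (hind : ∀ r : Fin n → ℚ, (∑ k, (r k : ℝ) * lam k) = 0 → ∀ k, r k = 0) :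
    (∑ t : Fin n × (Fin n → Fin (N+1) × Fin (N+1)),
        if lam t.1 + Ee lam N t.2 = 0 then c t.1 * Wc u N t.2 else 0)
      = ((N * (N+1)^(n-1) : ℕ) : ℂ) * ((∑ k, ‖c k‖ : ℝ) : ℂ) := by
  classical
  rw [Fintype.sum_prod_type]
  have hk : ∀ k : Fin n,
      (∑ p : Fin n → Fin (N+1) × Fin (N+1), if lam k + Ee lam N p = 0 then c k * Wc u N p else 0)
        = ((N * (N+1)^(n-1) : ℕ) : ℂ) * ((‖c k‖ : ℝ) : ℂ) := by
    intro k
    have hcond : ∀ p : Fin n → Fin (N+1) × Fin (N+1), (lam k + Ee lam N p = 0) ↔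
        ((∀ j, j ≠ k → (p j).1 = (p j).2) ∧ ((p k).2 : ℕ) = ((p k).1 : ℕ) + 1) := by
      intro p
      constructor
      · intro h0
        have hsum : (∑ j, (((((p j).1 : ℕ) : ℚ) - (((p j).2 : ℕ) : ℚ)
              + if j = k then 1 else 0 : ℚ) : ℝ) * lam j) = lam k + Ee lam N p := by
          have hterm : ∀ j, (((((p j).1 : ℕ) : ℚ) - (((p j).2 : ℕ) : ℚ)
                + if j = k then 1 else 0 : ℚ) : ℝ) * lam j
              = (((((p j).1 : ℕ) : ℝ) - (((p j).2 : ℕ) : ℝ)) * lam j)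
                + (if j = k then lam j else 0) := by
            intro j
            by_cases hj : j = k
            · rw [if_pos hj, if_pos hj]; push_cast; ring
            · rw [if_neg hj, if_neg hj]; push_cast; ring
          simp_rw [hterm]
          rw [Finset.sum_add_distrib]
          unfold Ee
          rw [Finset.sum_ite_eq' Finset.univ k lam, if_pos (Finset.mem_univ k)]
          ring
        have hr := hind (fun j => ((((p j).1 : ℕ) : ℚ) - (((p j).2 : ℕ) : ℚ)
            + if j = k then 1 else 0)) (by rw [hsum, h0])
        constructor
        · intro j hj
          have h3 : (((p j).1 : ℕ) : ℚ) - (((p j).2 : ℕ) : ℚ)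
              + (if j = k then 1 else 0) = 0 := hr j
          rw [if_neg hj, add_zero] at h3
          exact Fin.val_injective (by exact_mod_cast sub_eq_zero.mp h3)
        · have h3 : (((p k).1 : ℕ) : ℚ) - (((p k).2 : ℕ) : ℚ)
              + (if k = k then 1 else 0) = 0 := hr k
          rw [if_pos rfl] at h3
          have h4 : (((p k).2 : ℕ) : ℚ) = ((p k).1 : ℕ) + 1 := by linarith
          exact_mod_cast h4
      · rintro ⟨h1, h2⟩
        have hE : Ee lam N p = -lam k := by
          unfold Ee
          rw [Finset.sum_eq_single k (fun j _ hj => by rw [h1 j hj]; ring)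
            (fun hk' => absurd (Finset.mem_univ k) hk')]
          rw [h2]
          push_cast
          ring
        rw [hE]
        ring
    have hval : ∀ p : Fin n → Fin (N+1) × Fin (N+1),
        (if lam k + Ee lam N p = 0 then c k * Wc u N p else 0)
          = (‖c k‖ : ℂ) *
            (if ((∀ j, j ≠ k → (p j).1 = (p j).2) ∧ ((p k).2 : ℕ) = ((p k).1 : ℕ) + 1)
              then (1:ℂ) else 0) := by
      intro p
      by_cases h : lam k + Ee lam N p = 0
      · rw [if_pos h, if_pos ((hcond p).mp h), mul_one]
        obtain ⟨ha, hb⟩ := (hcond p).mp h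
        have hWp : Wc u N p = (starRingEnd ℂ) (u k) := by
          unfold Wc
          rw [Finset.prod_eq_single k (fun j _ hj => by
              rw [ha j hj, ← mul_pow, hu1 j, one_pow])
            (fun hk' => absurd (Finset.mem_univ k) hk')]
          rw [hb, pow_succ,
            show u k ^ ((p k).1 : ℕ) * ((starRingEnd ℂ) (u k) ^ ((p k).1 : ℕ)
                * (starRingEnd ℂ) (u k))
              = (u k * (starRingEnd ℂ) (u k)) ^ ((p k).1 : ℕ) * (starRingEnd ℂ) (u k) by ring,
            hu1 k, one_pow, one_mul]
        rw [hWp, hu2 k]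
      · rw [if_neg h, if_neg (fun hc => h ((hcond p).mpr hc)), mul_zero]
    simp_rw [hval]
    rw [← Finset.mul_sum]
    have hcount : (∑ p : Fin n → Fin (N+1) × Fin (N+1),
        if ((∀ j, j ≠ k → (p j).1 = (p j).2) ∧ ((p k).2 : ℕ) = ((p k).1 : ℕ) + 1)
          then (1:ℂ) else 0) = ((N * (N+1)^(n-1) : ℕ) : ℂ) := by
      have hsplit : ∀ p : Fin n → Fin (N+1) × Fin (N+1),
          (if ((∀ j, j ≠ k → (p j).1 = (p j).2) ∧ ((p k).2 : ℕ) = ((p k).1 : ℕ) + 1)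
            then (1:ℂ) else 0)
          = ∏ j, (if j = k then (if ((p j).2 : ℕ) = ((p j).1 : ℕ) + 1 then (1:ℂ) else 0)
              else (if (p j).1 = (p j).2 then (1:ℂ) else 0)) := by
        intro p
        by_cases h : (∀ j, j ≠ k → (p j).1 = (p j).2) ∧ ((p k).2 : ℕ) = ((p k).1 : ℕ) + 1
        · rw [if_pos h]
          refine (Finset.prod_eq_one fun j _ => ?_).symm
          by_cases hj : j = k
          · subst hj; rw [if_pos rfl, if_pos h.2]
          · rw [if_neg hj, if_pos (h.1 j hj)]
        · rw [if_neg h]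
          by_cases hA : ∀ j, j ≠ k → (p j).1 = (p j).2
          · have hB : ¬ ((p k).2 : ℕ) = ((p k).1 : ℕ) + 1 := fun hB => h ⟨hA, hB⟩
            refine (Finset.prod_eq_zero (Finset.mem_univ k) ?_).symm
            rw [if_pos rfl, if_neg hB]
          · push_neg at hA
            obtain ⟨j0, hj0k, hj0⟩ := hA
            refine (Finset.prod_eq_zero (Finset.mem_univ j0) ?_).symm
            rw [if_neg hj0k, if_neg hj0]
      simp_rw [hsplit]
      have key2 : (∑ p : Fin n → Fin (N+1) × Fin (N+1),
          ∏ j, (if j = k then (if ((p j).2 : ℕ) = ((p j).1 : ℕ) + 1 then (1:ℂ) else 0)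
            else (if (p j).1 = (p j).2 then (1:ℂ) else 0)))
          = ∏ j : Fin n, ∑ q : Fin (N+1) × Fin (N+1),
              (if j = k then (if (q.2 : ℕ) = (q.1 : ℕ) + 1 then (1:ℂ) else 0)
                else (if q.1 = q.2 then (1:ℂ) else 0)) :=
        (Fintype.prod_sum (fun (j : Fin n) (q : Fin (N+1) × Fin (N+1)) =>
          if j = k then (if (q.2 : ℕ) = (q.1 : ℕ) + 1 then (1:ℂ) else 0)
            else (if q.1 = q.2 then (1:ℂ) else 0))).symm
      rw [key2]
      have hfac : ∀ j : Fin n, (∑ q : Fin (N+1) × Fin (N+1),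
          if j = k then (if (q.2 : ℕ) = (q.1 : ℕ) + 1 then (1:ℂ) else 0)
            else (if q.1 = q.2 then (1:ℂ) else 0))
          = if j = k then ((N : ℕ) : ℂ) else ((N+1 : ℕ) : ℂ) := by
        intro j
        by_cases hj : j = k
        · simp_rw [if_pos hj]; exact cntN N
        · simp_rw [if_neg hj]; exact cntD N
      rw [Finset.prod_congr rfl fun j _ => hfac j]
      rw [← Finset.mul_prod_erase Finset.univ _ (Finset.mem_univ k), if_pos rfl]
      rw [Finset.prod_congr rfl (fun j hj => if_neg (Finset.ne_of_mem_erase hj))]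
      rw [Finset.prod_const, Finset.card_erase_of_mem (Finset.mem_univ k),
        Finset.card_univ, Fintype.card_fin]
      push_cast
      ring
    rw [hcount]
    ring
  rw [Finset.sum_congr rfl fun k _ => hk k]
  rw [← Finset.mul_sum]
  congr 1
  push_cast
  ring

private lemma keyineq {n : ℕ} (lam : Fin n → ℝ) (c : Fin n → ℂ) (f : ℝ → ℂ)
    (hf : ∀ x : ℝ, f x = ∑ k, c k * Complex.exp (Complex.I * (lam k : ℂ) * (x : ℂ)))
    (hind : ∀ r : Fin n → ℚ, (∑ k, (r k : ℝ) * lam k) = 0 → ∀ k, r k = 0)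
    (M : ℝ) (hM0 : 0 ≤ M) (hMle : ∀ x, ‖f x‖ ≤ M) (N : ℕ) :
    ((N * (N+1)^(n-1) : ℕ) : ℝ) * (∑ k, ‖c k‖) ≤ M * (((N+1)^n : ℕ) : ℝ) := by
  classical
  set u : Fin n → ℂ := fun k => uu (c k) with hu
  have hu1 : ∀ k, u k * (starRingEnd ℂ) (u k) = 1 := fun k => uu_unit (c k)
  have hu2 : ∀ k, c k * (starRingEnd ℂ) (u k) = (‖c k‖ : ℂ) :=
    fun k => mul_conj_uu (c k)
  have hS0 : (0:ℝ) ≤ ∑ k, ‖c k‖ :=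
    Finset.sum_nonneg fun k _ => norm_nonneg _
  have t2 : Tendsto (fun T : ℝ =>
      (∫ x in (-T)..T, ∏ k, (Qq u lam N k x * (starRingEnd ℂ) (Qq u lam N k x))) / (2*T))
      atTop (𝓝 (((N+1)^n : ℕ) : ℂ)) := by
    have h := mean_sum (Wc u N) (Ee lam N)
    rw [limP lam u hu1 hind] at h
    refine h.congr fun T => ?_
    congr 1
    exact intervalIntegral.integral_congr fun x _ => (expandP u lam N x).symm
  have t1 : Tendsto (fun T : ℝ =>
      (∫ x in (-T)..T, f x * ∏ k, (Qq u lam N k x * (starRingEnd ℂ) (Qq u lam N k x))) / (2*T))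
      atTop (𝓝 (((N * (N+1)^(n-1) : ℕ) : ℂ) * ((∑ k, ‖c k‖ : ℝ) : ℂ))) := by
    have h := mean_sum (fun t : Fin n × (Fin n → Fin (N+1) × Fin (N+1)) => c t.1 * Wc u N t.2)
      (fun t => lam t.1 + Ee lam N t.2)
    rw [limFP lam c u hu1 hu2 hind] at h
    refine h.congr fun T => ?_
    congr 1
    refine intervalIntegral.integral_congr fun x _ => ?_
    rw [hf x, expandP u lam N x, Finset.sum_mul_sum, Fintype.sum_prod_type]
    refine Finset.sum_congr rfl fun k _ => Finset.sum_congr rfl fun p _ => ?_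
    rw [mul_mul_mul_comm, ← Complex.exp_add]
    congr 2
    push_cast
    ring
  have hQcont : ∀ k, Continuous (fun x : ℝ => Qq u lam N k x) := by
    intro k
    unfold Qq
    apply continuous_finset_sum
    intro j _
    exact continuous_const.mul (Complex.continuous_exp.comp
      (continuous_const.mul Complex.continuous_ofReal))
  set Pr : ℝ → ℝ := fun x => ∏ k, Complex.normSq (Qq u lam N k x) with hPr
  have hPrc : Continuous Pr :=
    continuous_finset_prod _ fun k _ => Complex.continuous_normSq.comp (hQcont k)
  have hPr0 : ∀ x, 0 ≤ Pr x := fun x => Finset.prod_nonneg fun k _ => Complex.normSq_nonneg _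
  have hPrEq : ∀ x, (∏ k, (Qq u lam N k x * (starRingEnd ℂ) (Qq u lam N k x)))
      = ((Pr x : ℝ) : ℂ) := by
    intro x
    rw [hPr]
    push_cast
    exact Finset.prod_congr rfl fun k _ => (Complex.mul_conj _)
  have hev : ∀ᶠ T : ℝ in atTop,
      ‖(∫ x in (-T)..T, f x * ∏ k, (Qq u lam N k x * (starRingEnd ℂ) (Qq u lam N k x))) / (2*T)‖
        ≤ M * ‖(∫ x in (-T)..T, ∏ k, (Qq u lam N k x * (starRingEnd ℂ) (Qq u lam N k x))) / (2*T)‖ := by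
    filter_upwards [eventually_gt_atTop (0:ℝ)] with T hT
    have h2T : ‖((2:ℂ) * (T:ℂ))‖ = 2 * T := by
      rw [show ((2:ℂ) * (T:ℂ)) = ((2*T : ℝ) : ℂ) by push_cast; ring, Complex.norm_real,
        Real.norm_of_nonneg (by linarith)]
    have hintP : (∫ x in (-T)..T, ∏ k, (Qq u lam N k x * (starRingEnd ℂ) (Qq u lam N k x)))
        = ((∫ x in (-T)..T, Pr x : ℝ) : ℂ) := by
      rw [intervalIntegral.integral_congr (fun x _ => hPrEq x)]
      exact intervalIntegral.integral_ofReal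
    have hpt : ∀ t : ℝ, ‖f t * ∏ k, (Qq u lam N k t * (starRingEnd ℂ) (Qq u lam N k t))‖
        ≤ M * Pr t := by
      intro t
      rw [hPrEq t, norm_mul, Complex.norm_real, Real.norm_of_nonneg (hPr0 t)]
      exact mul_le_mul_of_nonneg_right (hMle t) (hPr0 t)
    have hIle : ‖∫ x in (-T)..T, f x * ∏ k, (Qq u lam N k x * (starRingEnd ℂ) (Qq u lam N k x))‖
        ≤ M * ∫ x in (-T)..T, Pr x := by
      have hb := intervalIntegral.norm_integral_le_of_norm_le (by linarith)
        (Filter.Eventually.of_forall fun t _ => hpt t)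
        ((continuous_const.mul hPrc).intervalIntegrable (μ := MeasureTheory.volume) (-T) T)
      refine hb.trans (le_of_eq ?_)
      rw [intervalIntegral.integral_const_mul]
    rw [norm_div, norm_div, hintP, h2T, ← mul_div_assoc]
    gcongr
    rw [Complex.norm_real, Real.norm_eq_abs]
    exact hIle.trans (mul_le_mul_of_nonneg_left (le_abs_self _) hM0)
  have final := le_of_tendsto_of_tendsto t1.norm (t2.norm.const_mul M) hev
  rw [norm_mul, Complex.norm_natCast, Complex.norm_real, Real.norm_eq_abs,
    _root_.abs_of_nonneg hS0, Complex.norm_natCast] at final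
  exact final
theorem stmt_17 (n : ℕ) (lam : Fin n → ℝ) (c : Fin n → ℂ)
    (f : ℝ → ℂ)
    (hf : ∀ x : ℝ, f x = ∑ k, c k * Complex.exp (Complex.I * (lam k : ℂ) * (x : ℂ))) :
    (⨆ x : ℝ, ‖f x‖) ≤ ∑ k, ‖c k‖ ∧
    ((∀ r : Fin n → ℚ, (∑ k, (r k : ℝ) * lam k) = 0 → ∀ k, r k = 0) →
      (⨆ x : ℝ, ‖f x‖) = ∑ k, ‖c k‖) := by
  have hub : ∀ x : ℝ, ‖f x‖ ≤ ∑ k, ‖c k‖ := by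
    intro x
    rw [hf x]
    refine le_trans (norm_sum_le _ _) (le_of_eq ?_)
    refine Finset.sum_congr rfl fun k _ => ?_
    rw [norm_mul, show Complex.I * (lam k : ℂ) * (x:ℂ) = ((lam k * x : ℝ) : ℂ) * Complex.I by
      push_cast; ring, Complex.norm_exp_ofReal_mul_I, mul_one]
  have hbdd : BddAbove (Set.range fun x => ‖f x‖) :=
    ⟨∑ k, ‖c k‖, Set.forall_mem_range.mpr hub⟩
  have h1 : (⨆ x : ℝ, ‖f x‖) ≤ ∑ k, ‖c k‖ := ciSup_le hub
  refine ⟨h1, fun hind => le_antisymm h1 ?_⟩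
  set S : ℝ := ∑ k, ‖c k‖ with hS
  set M : ℝ := ⨆ x : ℝ, ‖f x‖ with hM
  have hMle : ∀ x : ℝ, ‖f x‖ ≤ M := fun x => le_ciSup hbdd x
  have hM0 : (0:ℝ) ≤ M := le_trans (norm_nonneg (f 0)) (hMle 0)
  have hS0 : (0:ℝ) ≤ S := Finset.sum_nonneg fun k _ => norm_nonneg _
  -- key inequality for each N ≥ 1
  have key : ∀ N : ℕ, 0 < N →
      ((N * (N+1)^(n-1) : ℕ) : ℝ) * S ≤ M * (((N+1)^n : ℕ) : ℝ) := by
    intro N _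
    exact keyineq lam c f hf hind M hM0 hMle N
  -- conclude S ≤ M
  rcases Nat.eq_zero_or_pos n with hn | hn
  · subst hn
    simpa [hS] using hM0
  · by_contra hlt
    push_neg at hlt
    have hε : 0 < S - M := by linarith
    obtain ⟨N, hNgt⟩ := exists_nat_gt (M / (S - M))
    have hN1 : 0 < N := by
      have : (0:ℝ) ≤ M / (S - M) := div_nonneg hM0 hε.le
      exact_mod_cast lt_of_le_of_lt this hNgt
    have hkey := key N hN1
    have hpow : ((N+1)^n : ℕ) = (N+1)^(n-1) * (N+1) := by
      rw [← pow_succ]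
      congr 1
      omega
    rw [hpow] at hkey
    push_cast at hkey
    have hP : (0:ℝ) < ((N:ℝ)+1)^(n-1) := by positivity
    have h2 : (N:ℝ) * S ≤ M * ((N:ℝ)+1) := by
      have := hkey
      nlinarith [hP]
    -- N * (S - M) ≤ M
    have h3 : (N:ℝ) * (S - M) ≤ M := by nlinarith
    have h4 : (N:ℝ) ≤ M / (S - M) := (le_div_iff₀ hε).mpr h3
    linarith [lt_of_lt_of_le hNgt h4]
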